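/- Let m and N be non-negative integers. For real q > 1, the denominator determinant det_{1≤h,t≤N}((q^h)^{N−t+1} − (q^h)^{−(N−t+1)}) is nonzero, so sp_{(m^N)}(q, q^2, …, q^N) is defined by the determinant formula. Then, as q tends to 1 from above, sp_{(m^N)}(q, q^2, …, q^N) tends to ∏_{1≤h<t≤N+1} (2m+2N+3−h−t)/(2N+3−h−t). -/

import Mathlib

open Matrix Finset Filter

/-- The symplectic character `sp_λ(x₁,…,x_N)` as a ratio of determinants,
for an integer shape `lam` (indexed by `Fin N`, i.e. 0-based). -/
noncomputable def spChar {N : ℕ} (lam : Fin N → ℤ) (x : Fin N → ℂ) : ℂ :=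
  Matrix.det (Matrix.of fun h t : Fin N =>
      x h ^ (lam t + (N : ℤ) - ((t : ℕ) : ℤ)) -
        x h ^ (-(lam t + (N : ℤ) - ((t : ℕ) : ℤ)))) /
    Matrix.det (Matrix.of fun h t : Fin N =>
      x h ^ ((N : ℤ) - ((t : ℕ) : ℤ)) - x h ^ (-((N : ℤ) - ((t : ℕ) : ℤ))))
/-- The denominator determinant of the symplectic character. -/
noncomputable def spDen {N : ℕ} (x : Fin N → ℂ) : ℂ :=
  Matrix.det (Matrix.of fun h t : Fin N =>
    x h ^ ((N : ℤ) - ((t : ℕ) : ℤ)) - x h ^ (-((N : ℤ) - ((t : ℕ) : ℤ))))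

open Polynomial


/-- Normalized Chebyshev-like polynomials: `w^(k+1) - w⁻¹^(k+1) = (w - w⁻¹) * (cheb k).eval (w + w⁻¹)`. -/
noncomputable def cheb : ℕ → Polynomial ℂ
  | 0 => 1
  | 1 => X
  | (k+2) => X * cheb (k+1) - cheb k

lemma cheb_monic_deg : ∀ k : ℕ, (cheb k).Monic ∧ (cheb k).natDegree = k := by
  intro k
  induction k using Nat.twoStepInduction with
  | zero => exact ⟨monic_one, natDegree_one⟩
  | one => exact ⟨monic_X, natDegree_X⟩
  | more k ih1 ih2 =>
    have hm : (X * cheb (k+1)).Monic := monic_X.mul ih2.1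
    have hdeg : (X * cheb (k+1)).natDegree = k + 2 := by
      rw [natDegree_X_mul ih2.1.ne_zero, ih2.2]
    have hlt : (cheb k).degree < (X * cheb (k+1)).degree :=
      degree_lt_degree (by rw [hdeg, ih1.2]; omega)
    refine ⟨?_, ?_⟩
    · show (X * cheb (k+1) - cheb k).Monic
      exact hm.sub_of_left hlt
    · show (X * cheb (k+1) - cheb k).natDegree = k + 2
      rw [natDegree_sub_eq_left_of_natDegree_lt, hdeg]
      rw [hdeg, ih1.2]; omega

lemma cheb_eval (w : ℂ) (hw : w ≠ 0) :
    ∀ k : ℕ, w ^ (k+1) - w⁻¹ ^ (k+1) = (w - w⁻¹) * (cheb k).eval (w + w⁻¹) := by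
  have hinv : w * w⁻¹ = 1 := mul_inv_cancel₀ hw
  intro k
  induction k using Nat.twoStepInduction with
  | zero => simp [cheb]
  | one => simp only [cheb, eval_X]; ring
  | more k ih1 ih2 =>
    have : (cheb (k+2)).eval (w + w⁻¹)
        = (w + w⁻¹) * (cheb (k+1)).eval (w + w⁻¹) - (cheb k).eval (w + w⁻¹) := by
      simp [cheb]
    rw [this, mul_sub, ← mul_assoc, mul_comm (w - w⁻¹) (w + w⁻¹), mul_assoc,
      ← ih2, ← ih1]
    field_simp
    linear_combination (w*w⁻¹ - w⁻¹^2) * w⁻¹^k * hinv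

lemma detC {N : ℕ} (w : Fin N → ℂ) (hw : ∀ t, w t ≠ 0) :
    (Matrix.of fun h t : Fin N => w t ^ ((h:ℕ)+1) - (w t)⁻¹ ^ ((h:ℕ)+1)).det
      = (∏ t, (w t - (w t)⁻¹)) *
        ∏ t : Fin N, ∏ t' ∈ Ioi t, ((w t' + (w t')⁻¹) - (w t + (w t)⁻¹)) := by
  have h1 : (Matrix.of fun h t : Fin N => w t ^ ((h:ℕ)+1) - (w t)⁻¹ ^ ((h:ℕ)+1))
      = Matrix.of fun h t : Fin N =>
          (w t - (w t)⁻¹) * (cheb h).eval (w t + (w t)⁻¹) := by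
    ext h t
    exact cheb_eval (w t) (hw t) h
  have h2 : (Matrix.of fun h t : Fin N => (cheb (h:ℕ)).eval (w t + (w t)⁻¹)).det
      = ∏ t : Fin N, ∏ t' ∈ Ioi t, ((w t' + (w t')⁻¹) - (w t + (w t)⁻¹)) := by
    rw [← Matrix.det_transpose]
    have htr : (Matrix.of fun h t : Fin N => (cheb (h:ℕ)).eval (w t + (w t)⁻¹)).transpose
        = Matrix.of fun i j : Fin N => (cheb (j:ℕ)).eval (w i + (w i)⁻¹) := rfl
    rw [htr, ← Matrix.det_eval_matrixOfPolynomials_eq_det_vandermonde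
        (fun i : Fin N => w i + (w i)⁻¹) (fun i : Fin N => cheb (i:ℕ))
        (fun i => (cheb_monic_deg i).2) (fun i => (cheb_monic_deg i).1),
      Matrix.det_vandermonde]
  have h3 : (Matrix.of fun h t : Fin N =>
        (w t - (w t)⁻¹) * (cheb (h:ℕ)).eval (w t + (w t)⁻¹))
      = Matrix.of fun h t : Fin N => (fun s => w s - (w s)⁻¹) t *
          (Matrix.of fun h' t' : Fin N => (cheb (h':ℕ)).eval (w t' + (w t')⁻¹)) h t := rfl
  rw [h1, h3, Matrix.det_mul_row, h2]

lemma det_pows {N : ℕ} (q : ℂ) (hq : q ≠ 0) (e : Fin N → ℤ) (a : Fin N → ℕ)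
    (he : ∀ t, e t = (a t : ℤ)) :
    (Matrix.of fun h t : Fin N =>
        (q ^ ((h:ℕ)+1)) ^ (e t) - (q ^ ((h:ℕ)+1)) ^ (-(e t))).det
      = (∏ t, (q ^ a t - (q ^ a t)⁻¹)) *
        ∏ t : Fin N, ∏ t' ∈ Ioi t,
          ((q ^ a t' + (q ^ a t')⁻¹) - (q ^ a t + (q ^ a t)⁻¹)) := by
  have h1 : (Matrix.of fun h t : Fin N =>
        (q ^ ((h:ℕ)+1)) ^ (e t) - (q ^ ((h:ℕ)+1)) ^ (-(e t)))
      = Matrix.of fun h t : Fin N =>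
          (q ^ a t) ^ ((h:ℕ)+1) - ((q ^ a t)⁻¹) ^ ((h:ℕ)+1) := by
    ext h t
    show (q ^ ((h:ℕ)+1)) ^ (e t) - (q ^ ((h:ℕ)+1)) ^ (-(e t))
        = (q ^ a t) ^ ((h:ℕ)+1) - ((q ^ a t)⁻¹) ^ ((h:ℕ)+1)
    rw [he t, _root_.zpow_neg, zpow_natCast, ← pow_mul, mul_comm, pow_mul, inv_pow]
  rw [h1, detC (fun t => q ^ a t) (fun t => pow_ne_zero _ hq)]

section Helpers

variable {q : ℝ} (hq : 1 < q)
include hq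

lemma hQ0 : (q:ℂ) ≠ 0 := by
  simp only [ne_eq, Complex.ofReal_eq_zero]; intro h; rw [h] at hq; linarith

lemma hQ1 : (q:ℂ) - 1 ≠ 0 := by
  intro h
  have : (q:ℂ) = 1 := by linear_combination h
  rw [Complex.ofReal_eq_one] at this; rw [this] at hq; linarith

lemma GS_cast (n : ℕ) : (∑ i ∈ range n, (q:ℂ)^i) = ((∑ i ∈ range n, q^i : ℝ) : ℂ) := by
  push_cast; ring

lemma GS_ne (n : ℕ) (hn : 1 ≤ n) : (∑ i ∈ range n, (q:ℂ)^i) ≠ 0 := by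
  rw [GS_cast hq, ne_eq, Complex.ofReal_eq_zero]
  have : (0:ℝ) < ∑ i ∈ range n, q^i := by
    apply Finset.sum_pos (fun i _ => pow_pos (by linarith) i)
    exact Finset.nonempty_range_iff.mpr (by omega)
  linarith

lemma key1 (k : ℕ) :
    (q:ℂ)^k - ((q:ℂ)^k)⁻¹ = ((q:ℂ) - 1) * (∑ i ∈ range (k+k), (q:ℂ)^i) / (q:ℂ)^k := by
  rw [eq_div_iff (pow_ne_zero _ (hQ0 hq))]
  have hg := geom_sum_mul (q:ℂ) (k+k)
  have hk : ((q:ℂ)^k)⁻¹ * (q:ℂ)^k = 1 := inv_mul_cancel₀ (pow_ne_zero _ (hQ0 hq))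
  calc ((q:ℂ)^k - ((q:ℂ)^k)⁻¹) * (q:ℂ)^k = (q:ℂ)^k * (q:ℂ)^k - 1 := by
        rw [sub_mul, hk]
    _ = (q:ℂ)^(k+k) - 1 := by rw [pow_add]
    _ = ((q:ℂ) - 1) * (∑ i ∈ range (k+k), (q:ℂ)^i) := by rw [← hg]; ring

lemma key2 (k l : ℕ) :
    ((q:ℂ)^l + ((q:ℂ)^l)⁻¹) - ((q:ℂ)^k + ((q:ℂ)^k)⁻¹)
      = ((q:ℂ)^l - (q:ℂ)^k) * (((q:ℂ) - 1) * ∑ i ∈ range (k+l), (q:ℂ)^i) / (q:ℂ)^(k+l) := by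
  rw [eq_div_iff (pow_ne_zero _ (hQ0 hq))]
  have hg := geom_sum_mul (q:ℂ) (k+l)
  have hinv : ∀ j : ℕ, ((q:ℂ)^j)⁻¹ * (q:ℂ)^j = 1 :=
    fun j => inv_mul_cancel₀ (pow_ne_zero _ (hQ0 hq))
  calc (((q:ℂ)^l + ((q:ℂ)^l)⁻¹) - ((q:ℂ)^k + ((q:ℂ)^k)⁻¹)) * (q:ℂ)^(k+l)
      = ((q:ℂ)^l - (q:ℂ)^k) * (q:ℂ)^(k+l)
        + (((q:ℂ)^l)⁻¹ * (q:ℂ)^l) * (q:ℂ)^k - (((q:ℂ)^k)⁻¹ * (q:ℂ)^k) * (q:ℂ)^l := by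
        rw [pow_add]; ring
    _ = ((q:ℂ)^l - (q:ℂ)^k) * ((q:ℂ)^(k+l) - 1) + ((q:ℂ)^k - (q:ℂ)^l)
        + ((q:ℂ)^l - (q:ℂ)^k) := by rw [hinv, hinv]; ring
    _ = ((q:ℂ)^l - (q:ℂ)^k) * (((q:ℂ) - 1) * ∑ i ∈ range (k+l), (q:ℂ)^i) := by
        rw [← hg]; ring

lemma pow_sub_ne (k l : ℕ) (hkl : k ≠ l) : (q:ℂ)^l - (q:ℂ)^k ≠ 0 := by
  have hne : q^l ≠ q^k := by
    rcases lt_or_gt_of_ne hkl with h|h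
    · exact (pow_lt_pow_right₀ hq h).ne'
    · exact (pow_lt_pow_right₀ hq h).ne
  rw [sub_ne_zero]
  exact_mod_cast hne

lemma den_diag_ne (k : ℕ) (hk : 1 ≤ k) : (q:ℂ)^k - ((q:ℂ)^k)⁻¹ ≠ 0 := by
  rw [key1 hq]
  exact div_ne_zero (mul_ne_zero (hQ1 hq) (GS_ne hq _ (by omega))) (pow_ne_zero _ (hQ0 hq))

lemma den_off_ne (k l : ℕ) (hk : 1 ≤ k) (hkl : k ≠ l) :
    ((q:ℂ)^l + ((q:ℂ)^l)⁻¹) - ((q:ℂ)^k + ((q:ℂ)^k)⁻¹) ≠ 0 := by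
  rw [key2 hq]
  exact div_ne_zero (mul_ne_zero (pow_sub_ne hq k l hkl)
    (mul_ne_zero (hQ1 hq) (GS_ne hq _ (by omega)))) (pow_ne_zero _ (hQ0 hq))

lemma ratio_diag (m k : ℕ) (hk : 1 ≤ k) :
    ((q:ℂ)^(m+k) - ((q:ℂ)^(m+k))⁻¹) / ((q:ℂ)^k - ((q:ℂ)^k)⁻¹)
      = ((q:ℂ)^m)⁻¹ * (∑ i ∈ range ((m+k)+(m+k)), (q:ℂ)^i)
          / (∑ i ∈ range (k+k), (q:ℂ)^i) := by
  have h1 : ((q:ℂ)-1) ≠ 0 := hQ1 hq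
  have h3 : ((q:ℂ))^k ≠ 0 := pow_ne_zero _ (hQ0 hq)
  rw [key1 hq, key1 hq, div_div_div_comm, mul_div_mul_left _ _ h1,
    show (q:ℂ)^(m+k) = (q:ℂ)^m * (q:ℂ)^k from pow_add _ _ _,
    mul_div_cancel_right₀ _ h3]
  ring

lemma ratio_off (m k l : ℕ) (hk : 1 ≤ k) (hl : 1 ≤ l) (hkl : k ≠ l) :
    (((q:ℂ)^(m+l) + ((q:ℂ)^(m+l))⁻¹) - ((q:ℂ)^(m+k) + ((q:ℂ)^(m+k))⁻¹)) /
      (((q:ℂ)^l + ((q:ℂ)^l)⁻¹) - ((q:ℂ)^k + ((q:ℂ)^k)⁻¹))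
      = ((q:ℂ)^m)⁻¹ * (∑ i ∈ range ((m+k)+(m+l)), (q:ℂ)^i)
          / (∑ i ∈ range (k+l), (q:ℂ)^i) := by
  have h1 : ((q:ℂ)-1) ≠ 0 := hQ1 hq
  have h2 : (∑ i ∈ range (k+l), (q:ℂ)^i) ≠ 0 := GS_ne hq _ (by omega)
  have h3 : ((q:ℂ))^(k+l) ≠ 0 := pow_ne_zero _ (hQ0 hq)
  have h4 : ((q:ℂ))^m ≠ 0 := pow_ne_zero _ (hQ0 hq)
  have h5 : (q:ℂ)^l - (q:ℂ)^k ≠ 0 := pow_sub_ne hq k l hkl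
  have hml : (q:ℂ)^(m+l) - (q:ℂ)^(m+k) = (q:ℂ)^m * ((q:ℂ)^l - (q:ℂ)^k) := by
    rw [pow_add, pow_add]; ring
  rw [key2 hq, key2 hq, div_div_div_comm]
  have e1 : ((q:ℂ)^(m+l) - (q:ℂ)^(m+k)) * (((q:ℂ)-1) * ∑ i ∈ range ((m+k)+(m+l)), (q:ℂ)^i)
      = ((q:ℂ)^l - (q:ℂ)^k) * (((q:ℂ)-1) * ((q:ℂ)^m * ∑ i ∈ range ((m+k)+(m+l)), (q:ℂ)^i)) := by
    rw [hml]; ring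
  rw [e1, mul_div_mul_left _ _ h5, mul_div_mul_left _ _ h1,
    show (q:ℂ)^((m+k)+(m+l)) = ((q:ℂ)^m * (q:ℂ)^m) * (q:ℂ)^(k+l) by
      rw [show (m+k)+(m+l) = (m+m)+(k+l) by omega, pow_add, pow_add],
    mul_div_cancel_right₀ _ h3]
  field_simp

end Helpers

lemma prod_le_split {N : ℕ} (g : Fin N → Fin N → ℂ) :
    ∏ u : Fin N, ∏ v : Fin N, (if u ≤ v then g u v else 1)
      = (∏ u, g u u) * ∏ u : Fin N, ∏ v ∈ Ioi u, g u v := by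
  rw [← Finset.prod_mul_distrib]
  refine Finset.prod_congr rfl fun u _ => ?_
  rw [← Finset.prod_filter]
  have : (Finset.univ.filter fun v => u ≤ v) = Finset.Ici u := by
    ext v; simp
  rw [this, Finset.Ici_eq_cons_Ioi, Finset.prod_cons]

lemma tendsto_factor (m A B : ℕ) (hA : 1 ≤ A) :
    Tendsto (fun q : ℝ =>
        (((q:ℂ))^m)⁻¹ * (∑ i ∈ range B, (q:ℂ)^i) / (∑ i ∈ range A, (q:ℂ)^i))
      (nhdsWithin 1 (Set.Ioi 1)) (nhds ((B:ℂ)/(A:ℂ))) := by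
  have hc : Tendsto (fun q : ℝ => (q:ℂ)) (nhdsWithin 1 (Set.Ioi 1)) (nhds 1) := by
    have := (Complex.continuous_ofReal.tendsto 1).mono_left
      (nhdsWithin_le_nhds (s := Set.Ioi (1:ℝ)))
    simpa using this
  have t1 : Tendsto (fun q : ℝ => (((q:ℂ))^m)⁻¹) (nhdsWithin 1 (Set.Ioi 1)) (nhds 1) := by
    have := ((hc.pow m).inv₀ (by simp)).comp tendsto_id
    simpa using this
  have tS : ∀ n : ℕ, Tendsto (fun q : ℝ => ∑ i ∈ range n, (q:ℂ)^i)
      (nhdsWithin 1 (Set.Ioi 1)) (nhds (n : ℂ)) := by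
    intro n
    have := tendsto_finset_sum (range n) (fun i _ => hc.pow i)
    simpa using this
  have hAne : ((A:ℂ)) ≠ 0 := Nat.cast_ne_zero.mpr (by omega)
  have := ((t1.mul (tS B)).div (tS A)) hAne
  rw [one_mul] at this; exact this

lemma target_reindex (m N : ℕ) :
    (∏ h : Fin (N + 1), ∏ t : Fin (N + 1),
        if h < t then
          (((2 * m + 2 * N + 3 : ℤ) - ((h : ℕ) + 1) - ((t : ℕ) + 1) : ℤ) : ℂ) /
            (((2 * N + 3 : ℤ) - ((h : ℕ) + 1) - ((t : ℕ) + 1) : ℤ) : ℂ)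
        else 1)
      = ∏ u : Fin N, ∏ v : Fin N,
          (if u ≤ v then
            ((((m + (N - (u:ℕ))) + (m + (N - (v:ℕ))) : ℕ)) : ℂ) /
              ((((N - (u:ℕ)) + (N - (v:ℕ)) : ℕ)) : ℂ)
          else 1) := by
  rw [Fin.prod_univ_castSucc]
  have hlast : (∏ t : Fin (N+1),
      if (Fin.last N) < t then
        (((2 * m + 2 * N + 3 : ℤ) - (((Fin.last N) : ℕ) + 1) - ((t : ℕ) + 1) : ℤ) : ℂ) /
          (((2 * N + 3 : ℤ) - (((Fin.last N) : ℕ) + 1) - ((t : ℕ) + 1) : ℤ) : ℂ)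
      else 1) = 1 := by
    apply Finset.prod_eq_one
    intro t _
    rw [if_neg (not_lt.mpr (Fin.le_last t))]
  rw [hlast, mul_one]
  refine Finset.prod_congr rfl fun u _ => ?_
  rw [Fin.prod_univ_succ]
  have h0 : ¬ ((u.castSucc : Fin (N+1)) < 0) := by
    exact not_lt.mpr (Fin.zero_le _)
  rw [if_neg h0, one_mul]
  refine Finset.prod_congr rfl fun v _ => ?_
  have hcond : ((u.castSucc : Fin (N+1)) < v.succ) ↔ u ≤ v := by
    rw [Fin.lt_def, Fin.le_def]
    simp [Nat.lt_succ_iff]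
  rw [if_congr hcond rfl rfl]
  by_cases huv : u ≤ v
  · rw [if_pos huv, if_pos huv]
    have hu : ((u:ℕ) : ℤ) ≤ (N : ℤ) := by exact_mod_cast (Nat.le_of_lt u.isLt)
    have hv : ((v:ℕ) : ℤ) ≤ (N : ℤ) := by exact_mod_cast (Nat.le_of_lt v.isLt)
    have hun : (u:ℕ) ≤ N := Nat.le_of_lt u.isLt
    have hvn : (v:ℕ) ≤ N := Nat.le_of_lt v.isLt
    congr 1
    · have : ((2 * m + 2 * N + 3 : ℤ) - (((u.castSucc : Fin (N+1)) : ℕ) + 1)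
          - (((v.succ : Fin (N+1)) : ℕ) + 1) : ℤ)
          = (((m + (N - (u:ℕ))) + (m + (N - (v:ℕ))) : ℕ) : ℤ) := by
        simp only [Fin.coe_castSucc, Fin.val_succ]
        push_cast [Nat.cast_sub hun, Nat.cast_sub hvn]
        ring
      rw [show ((((2 * m + 2 * N + 3 : ℤ) - (((u.castSucc : Fin (N+1)) : ℕ) + 1)
          - (((v.succ : Fin (N+1)) : ℕ) + 1) : ℤ)) : ℂ)
        = ((((m + (N - (u:ℕ))) + (m + (N - (v:ℕ))) : ℕ) : ℤ) : ℂ) from by rw [this]]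
      push_cast; ring
    · have : ((2 * N + 3 : ℤ) - (((u.castSucc : Fin (N+1)) : ℕ) + 1)
          - (((v.succ : Fin (N+1)) : ℕ) + 1) : ℤ)
          = (((N - (u:ℕ)) + (N - (v:ℕ)) : ℕ) : ℤ) := by
        simp only [Fin.coe_castSucc, Fin.val_succ]
        push_cast [Nat.cast_sub hun, Nat.cast_sub hvn]
        ring
      rw [show ((((2 * N + 3 : ℤ) - (((u.castSucc : Fin (N+1)) : ℕ) + 1)
          - (((v.succ : Fin (N+1)) : ℕ) + 1) : ℤ)) : ℂ)
        = ((((N - (u:ℕ)) + (N - (v:ℕ)) : ℕ) : ℤ) : ℂ) from by rw [this]]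
      push_cast; ring
  · rw [if_neg huv, if_neg huv]

/-- For `q > 1`, the denominator determinant of the symplectic character at
the variables `q, q², …, q^N` is nonzero, and
`sp_{(m^N)}(q,q²,…,q^N)` tends, as `q → 1⁺`, to
`∏_{1≤h<t≤N+1} (2m+2N+3-h-t)/(2N+3-h-t)`. -/
theorem sp_q_powers_limit (m N : ℕ) :
    (∀ q : ℝ, 1 < q → spDen (fun h : Fin N => ((q : ℂ)) ^ ((h : ℕ) + 1)) ≠ 0) ∧
      Tendsto
        (fun q : ℝ => spChar (fun _ => (m : ℤ)) (fun h : Fin N => ((q : ℂ)) ^ ((h : ℕ) + 1)))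
        (nhdsWithin (1 : ℝ) (Set.Ioi 1))
        (nhds
          (∏ h : Fin (N + 1), ∏ t : Fin (N + 1),
            if h < t then
              (((2 * m + 2 * N + 3 : ℤ) - ((h : ℕ) + 1) - ((t : ℕ) + 1) : ℤ) : ℂ) /
                (((2 * N + 3 : ℤ) - ((h : ℕ) + 1) - ((t : ℕ) + 1) : ℤ) : ℂ)
            else 1)) := by
  have ha : ∀ t : Fin N, ((N : ℤ) - ((t:ℕ):ℤ)) = ((N - (t:ℕ) : ℕ) : ℤ) := by
    intro t; have := t.isLt; omega
  have hb : ∀ t : Fin N, ((m:ℤ) + (N : ℤ) - ((t:ℕ):ℤ)) = ((m + (N - (t:ℕ)) : ℕ) : ℤ) := by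
    intro t; have := t.isLt; omega
  have hden : ∀ q : ℝ, 1 < q → spDen (fun h : Fin N => ((q : ℂ)) ^ ((h : ℕ) + 1))
      = (∏ t : Fin N, ((q:ℂ) ^ (N - (t:ℕ)) - ((q:ℂ) ^ (N - (t:ℕ)))⁻¹)) *
        ∏ t : Fin N, ∏ t' ∈ Ioi t,
          (((q:ℂ) ^ (N - ((t':Fin N):ℕ)) + ((q:ℂ) ^ (N - ((t':Fin N):ℕ)))⁻¹) -
            ((q:ℂ) ^ (N - (t:ℕ)) + ((q:ℂ) ^ (N - (t:ℕ)))⁻¹)) := by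
    intro q hq
    exact det_pows (q:ℂ) (hQ0 hq) (fun t => (N:ℤ) - ((t:ℕ):ℤ)) (fun t => N - (t:ℕ)) ha
  have hnum : ∀ q : ℝ, 1 < q →
      (Matrix.of fun h t : Fin N =>
          ((q:ℂ) ^ ((h:ℕ)+1)) ^ ((m:ℤ) + (N : ℤ) - ((t:ℕ):ℤ)) -
          ((q:ℂ) ^ ((h:ℕ)+1)) ^ (-((m:ℤ) + (N : ℤ) - ((t:ℕ):ℤ)))).det
      = (∏ t : Fin N, ((q:ℂ) ^ (m + (N - (t:ℕ))) - ((q:ℂ) ^ (m + (N - (t:ℕ))))⁻¹)) *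
        ∏ t : Fin N, ∏ t' ∈ Ioi t,
          (((q:ℂ) ^ (m + (N - ((t':Fin N):ℕ))) + ((q:ℂ) ^ (m + (N - ((t':Fin N):ℕ))))⁻¹) -
            ((q:ℂ) ^ (m + (N - (t:ℕ))) + ((q:ℂ) ^ (m + (N - (t:ℕ))))⁻¹)) := by
    intro q hq
    exact det_pows (q:ℂ) (hQ0 hq) (fun t => (m:ℤ) + (N:ℤ) - ((t:ℕ):ℤ))
      (fun t => m + (N - (t:ℕ))) hb
  constructor
  · intro q hq
    rw [hden q hq]
    apply mul_ne_zero
    · rw [Finset.prod_ne_zero_iff]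
      intro t _
      exact den_diag_ne hq (N - (t:ℕ)) (by have := t.isLt; omega)
    · rw [Finset.prod_ne_zero_iff]
      intro t _
      rw [Finset.prod_ne_zero_iff]
      intro t' ht'
      have htt' : (t:ℕ) < (t':ℕ) := Fin.lt_def.mp (Finset.mem_Ioi.mp ht')
      have h2 := t'.isLt
      exact den_off_ne hq (N - (t:ℕ)) (N - (t':ℕ)) (by omega) (by omega)
  · rw [target_reindex m N]
    have hP : Tendsto (fun q : ℝ => ∏ u : Fin N, ∏ v : Fin N,
        (if u ≤ v then
          (((q:ℂ))^m)⁻¹ *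
            (∑ i ∈ range ((m + (N - (u:ℕ))) + (m + (N - (v:ℕ)))), (q:ℂ)^i) /
            (∑ i ∈ range ((N - (u:ℕ)) + (N - (v:ℕ))), (q:ℂ)^i)
        else 1))
        (nhdsWithin (1:ℝ) (Set.Ioi 1))
        (nhds (∏ u : Fin N, ∏ v : Fin N,
          (if u ≤ v then
            ((((m + (N - (u:ℕ))) + (m + (N - (v:ℕ))) : ℕ)) : ℂ) /
              ((((N - (u:ℕ)) + (N - (v:ℕ)) : ℕ)) : ℂ)
          else 1))) := by
      apply tendsto_finset_prod
      intro u _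
      apply tendsto_finset_prod
      intro v _
      by_cases huv : u ≤ v
      · simp only [if_pos huv]
        exact tendsto_factor m ((N - (u:ℕ)) + (N - (v:ℕ)))
          ((m + (N - (u:ℕ))) + (m + (N - (v:ℕ)))) (by have := u.isLt; omega)
      · simp only [if_neg huv]
        exact tendsto_const_nhds
    refine Tendsto.congr' ?_ hP
    filter_upwards [self_mem_nhdsWithin] with q hq
    have hq1 : 1 < q := hq
    symm
    calc spChar (fun _ => (m:ℤ)) (fun h : Fin N => ((q : ℂ)) ^ ((h : ℕ) + 1))
        = (Matrix.of fun h t : Fin N =>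
            ((q:ℂ) ^ ((h:ℕ)+1)) ^ ((m:ℤ) + (N : ℤ) - ((t:ℕ):ℤ)) -
            ((q:ℂ) ^ ((h:ℕ)+1)) ^ (-((m:ℤ) + (N : ℤ) - ((t:ℕ):ℤ)))).det
          / spDen (fun h : Fin N => ((q : ℂ)) ^ ((h : ℕ) + 1)) := rfl
      _ = ((∏ t : Fin N, ((q:ℂ) ^ (m + (N - (t:ℕ))) - ((q:ℂ) ^ (m + (N - (t:ℕ))))⁻¹)) *
            ∏ t : Fin N, ∏ t' ∈ Ioi t,
              (((q:ℂ) ^ (m + (N - ((t':Fin N):ℕ))) + ((q:ℂ) ^ (m + (N - ((t':Fin N):ℕ))))⁻¹) -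
                ((q:ℂ) ^ (m + (N - (t:ℕ))) + ((q:ℂ) ^ (m + (N - (t:ℕ))))⁻¹))) /
          ((∏ t : Fin N, ((q:ℂ) ^ (N - (t:ℕ)) - ((q:ℂ) ^ (N - (t:ℕ)))⁻¹)) *
            ∏ t : Fin N, ∏ t' ∈ Ioi t,
              (((q:ℂ) ^ (N - ((t':Fin N):ℕ)) + ((q:ℂ) ^ (N - ((t':Fin N):ℕ)))⁻¹) -
                ((q:ℂ) ^ (N - (t:ℕ)) + ((q:ℂ) ^ (N - (t:ℕ)))⁻¹))) := by
          rw [hnum q hq1, hden q hq1]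
      _ = (∏ t : Fin N,
            (((q:ℂ) ^ (m + (N - (t:ℕ))) - ((q:ℂ) ^ (m + (N - (t:ℕ))))⁻¹) /
              ((q:ℂ) ^ (N - (t:ℕ)) - ((q:ℂ) ^ (N - (t:ℕ)))⁻¹))) *
          ∏ t : Fin N, ∏ t' ∈ Ioi t,
            ((((q:ℂ) ^ (m + (N - ((t':Fin N):ℕ))) + ((q:ℂ) ^ (m + (N - ((t':Fin N):ℕ))))⁻¹) -
                ((q:ℂ) ^ (m + (N - (t:ℕ))) + ((q:ℂ) ^ (m + (N - (t:ℕ))))⁻¹)) /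
              (((q:ℂ) ^ (N - ((t':Fin N):ℕ)) + ((q:ℂ) ^ (N - ((t':Fin N):ℕ)))⁻¹) -
                ((q:ℂ) ^ (N - (t:ℕ)) + ((q:ℂ) ^ (N - (t:ℕ)))⁻¹))) := by
          rw [mul_div_mul_comm, ← Finset.prod_div_distrib, ← Finset.prod_div_distrib]
          congr 1
          exact Finset.prod_congr rfl fun t _ => (Finset.prod_div_distrib _ _).symm
      _ = (∏ t : Fin N,
            ((((q:ℂ))^m)⁻¹ *
              (∑ i ∈ range ((m + (N - (t:ℕ))) + (m + (N - (t:ℕ)))), (q:ℂ)^i) /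
              (∑ i ∈ range ((N - (t:ℕ)) + (N - (t:ℕ))), (q:ℂ)^i))) *
          ∏ t : Fin N, ∏ t' ∈ Ioi t,
            ((((q:ℂ))^m)⁻¹ *
              (∑ i ∈ range ((m + (N - (t:ℕ))) + (m + (N - ((t':Fin N):ℕ)))), (q:ℂ)^i) /
              (∑ i ∈ range ((N - (t:ℕ)) + (N - ((t':Fin N):ℕ))), (q:ℂ)^i)) := by
          congr 1
          · exact Finset.prod_congr rfl fun t _ =>
              ratio_diag hq1 m (N - (t:ℕ)) (by have := t.isLt; omega)
          · refine Finset.prod_congr rfl fun t _ => Finset.prod_congr rfl fun t' ht' => ?_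
            have htt' : (t:ℕ) < (t':ℕ) := Fin.lt_def.mp (Finset.mem_Ioi.mp ht')
            have h2 := t'.isLt
            exact ratio_off hq1 m (N - (t:ℕ)) (N - (t':ℕ)) (by omega) (by omega) (by omega)
      _ = ∏ u : Fin N, ∏ v : Fin N,
          (if u ≤ v then
            (((q:ℂ))^m)⁻¹ *
              (∑ i ∈ range ((m + (N - (u:ℕ))) + (m + (N - (v:ℕ)))), (q:ℂ)^i) /
              (∑ i ∈ range ((N - (u:ℕ)) + (N - (v:ℕ))), (q:ℂ)^i)
          else 1) := (prod_le_split (fun u v : Fin N =>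
            (((q:ℂ))^m)⁻¹ *
              (∑ i ∈ range ((m + (N - (u:ℕ))) + (m + (N - (v:ℕ)))), (q:ℂ)^i) /
              (∑ i ∈ range ((N - (u:ℕ)) + (N - (v:ℕ))), (q:ℂ)^i))).symm
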